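/- Define d₁(x,y) := min(|x−y|, 1). Let N ≥ 2 and let x₁,…,x_N and y₁,…,y_N be real numbers. Let i* ∈ {1,…,N} be an index with x_{i*} = min_i x_i and j* ∈ {1,…,N} an index with y_{j*} = min_j y_j. Then min over bijections ι : {1,…,N}∖{i*} → {1,…,N}∖{j*} of Σ_{i ≠ i*} d₁(x_i, y_{ι(i)}) is at most min over bijections σ : {1,…,N} → {1,…,N} of Σ_{i=1}^N d₁(x_i, y_{σ(i)}). -/
import Mathlib


/-- The truncated distance `d₁(x,y) := min(|x−y|, 1)` on `ℝ`. -/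
noncomputable def d1 (x y : ℝ) : ℝ := min |x - y| 1

lemma d1_nonneg (x y : ℝ) : 0 ≤ d1 x y := le_min (abs_nonneg _) zero_le_one

lemma d1_key {a a' b b' : ℝ} (ha : a ≤ a') (hb : b ≤ b') :
    d1 a' b' ≤ d1 a' b + d1 a b' := by
  rcases le_total b' a' with h | h
  · have h1 : d1 a' b' ≤ d1 a' b := by
      unfold d1
      refine min_le_min ?_ le_rfl
      rw [abs_of_nonneg (by linarith), abs_of_nonneg (by linarith)]
      linarith
    linarith [d1_nonneg a b']
  · have h1 : d1 a' b' ≤ d1 a b' := by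
      unfold d1
      refine min_le_min ?_ le_rfl
      rw [abs_of_nonpos (by linarith), abs_of_nonpos (by linarith)]
      linarith
    linarith [d1_nonneg a' b]

/-- Removing the minimal point from each of two `N`-point configurations does not
increase the optimal (Monge) matching cost for the truncated cost `d₁`: the minimum
over bijections `ι : {1,…,N}∖{i*} → {1,…,N}∖{j*}` of `Σ_{i ≠ i*} d₁(x_i, y_{ι(i)})`
is at most the minimum over bijections `σ` of `{1,…,N}` of `Σ_i d₁(x_i, y_{σ(i)})`,
where `x_{i*} = min_i x_i` and `y_{j*} = min_j y_j`. -/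
theorem monge_cost_remove_min_le (N : ℕ) (hN : 2 ≤ N)
    (x y : Fin N → ℝ) (istar jstar : Fin N)
    (hx : ∀ i, x istar ≤ x i) (hy : ∀ j, y jstar ≤ y j) :
    sInf {c : ℝ | ∃ ι : {i : Fin N // i ≠ istar} ≃ {j : Fin N // j ≠ jstar},
        c = ∑ i : {i : Fin N // i ≠ istar}, d1 (x i.1) (y (ι i).1)}
      ≤ sInf {c : ℝ | ∃ σ : Equiv.Perm (Fin N),
        c = ∑ i, d1 (x i) (y (σ i))} := by
  set L := {c : ℝ | ∃ ι : {i : Fin N // i ≠ istar} ≃ {j : Fin N // j ≠ jstar},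
        c = ∑ i : {i : Fin N // i ≠ istar}, d1 (x i.1) (y (ι i).1)} with hL
  have hbdd : BddBelow L := by
    refine ⟨0, fun c hc => ?_⟩
    obtain ⟨ι, rfl⟩ := hc
    exact Finset.sum_nonneg fun i _ => d1_nonneg _ _
  have hRne : {c : ℝ | ∃ σ : Equiv.Perm (Fin N),
        c = ∑ i, d1 (x i) (y (σ i))}.Nonempty := ⟨_, Equiv.refl _, rfl⟩
  refine le_csInf hRne fun c hc => ?_
  obtain ⟨σ, rfl⟩ := hc
  -- the swapped permutation
  set i0 : Fin N := σ.symm jstar with hi0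
  set τ : Equiv.Perm (Fin N) := (Equiv.swap istar i0).trans σ with hτ
  have hτistar : τ istar = jstar := by
    simp [hτ, Equiv.swap_apply_left, hi0]
  have hmem : ∀ i : Fin N, i ≠ istar ↔ τ i ≠ jstar := by
    intro i
    constructor
    · intro h h'
      exact h (τ.injective (h'.trans hτistar.symm))
    · intro h h'
      exact h (h' ▸ hτistar)
  set ι : {i : Fin N // i ≠ istar} ≃ {j : Fin N // j ≠ jstar} :=
    (Equiv.subtypeEquiv τ hmem) with hι
  have key : (∑ i : {i : Fin N // i ≠ istar}, d1 (x i.1) (y (ι i).1))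
      ≤ ∑ i, d1 (x i) (y (σ i)) := by
    have hsub : (∑ i : {i : Fin N // i ≠ istar}, d1 (x i.1) (y (ι i).1))
        = (∑ i, d1 (x i) (y (τ i))) - d1 (x istar) (y (τ istar)) := by
      have := Finset.sum_subtype (p := fun i => i ≠ istar) (F := inferInstance) (Finset.univ.erase istar)
        (fun i => by simp [Finset.mem_erase]) (fun i => d1 (x i) (y (τ i)))
      simp only [hι, Equiv.subtypeEquiv_apply]
      rw [← this, eq_sub_iff_add_eq, add_comm,
        Finset.add_sum_erase Finset.univ (fun i => d1 (x i) (y (τ i))) (Finset.mem_univ istar)]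
    rw [hsub, hτistar, sub_le_iff_le_add]
    by_cases hcase : i0 = istar
    · have : τ = σ := by
        simp [hτ, hcase, Equiv.swap_self]
      rw [this]
      linarith [d1_nonneg (x istar) (y jstar)]
    · -- i0 ≠ istar
      have hpair : ({istar, i0} : Finset (Fin N)) ⊆ Finset.univ := Finset.subset_univ _
      have hsd : ∀ (f : Fin N → ℝ),
          ∑ i, f i = (∑ i ∈ Finset.univ \ {istar, i0}, f i) + (f istar + f i0) := by
        intro f
        rw [← Finset.sum_pair (Ne.symm hcase), Finset.sum_sdiff hpair]
      rw [hsd (fun i => d1 (x i) (y (τ i))), hsd (fun i => d1 (x i) (y (σ i)))]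
      have hoff : ∀ i ∈ Finset.univ \ ({istar, i0} : Finset (Fin N)),
          d1 (x i) (y (τ i)) = d1 (x i) (y (σ i)) := by
        intro i hi
        simp only [Finset.mem_sdiff, Finset.mem_insert, Finset.mem_singleton, not_or] at hi
        have : τ i = σ i := by
          simp only [hτ, Equiv.trans_apply,
            Equiv.swap_apply_of_ne_of_ne hi.2.1 hi.2.2]
        rw [this]
      rw [Finset.sum_congr rfl hoff]
      have hτi0 : τ i0 = σ istar := by
        simp [hτ, Equiv.swap_apply_right]
      have hσi0 : σ i0 = jstar := by simp [hi0]
      rw [hτistar, hτi0, hσi0]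
      have := d1_key (hx i0) (hy (σ istar))
      linarith
  exact (csInf_le hbdd ⟨ι, rfl⟩).trans key
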